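/- Fix constants A > 0 (denoting α_i + ∑_k w_ik·b_kj), c ≥ 0, Q ≥ 0 (denoting ∑_{l≠j} 1/p_l), and β > 0. The function g(p) = (1/(2β)) · (A − p)·(p − c) / (1 + p·Q) for p in an interval where 1 + p·Q > 0 satisfies g''(p) < 0 whenever the numerator terms 2 + 2AQ + 2cQ + 2AcQ² are positive; in particular g is strictly concave on (0, ∞) when A > 0 and Q > 0. -/

import Mathlib

theorem stmt_7 (A c Q β : ℝ) (hA : 0 < A) (hc : 0 ≤ c) (hQ : 0 < Q) (hβ : 0 < β) :
    (∀ p : ℝ, 0 < p →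
      deriv (deriv (fun s : ℝ => (1 / (2 * β)) * ((A - s) * (s - c) / (1 + s * Q)))) p < 0) ∧
    StrictConcaveOn ℝ (Set.Ioi (0 : ℝ))
      (fun s : ℝ => (1 / (2 * β)) * ((A - s) * (s - c) / (1 + s * Q))) := by
  have hQ' : Q ≠ 0 := hQ.ne'
  have hβ' : β ≠ 0 := hβ.ne'
  set g : ℝ → ℝ := fun s => (1 / (2 * β)) * ((A - s) * (s - c) / (1 + s * Q)) with hgdef
  set r : ℝ := -(A * c) - (A + c) / Q - 1 / Q ^ 2 with hrdef
  have hr_neg : r < 0 := by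
    have h1 : 0 ≤ A * c := mul_nonneg hA.le hc
    have h2 : 0 < (A + c) / Q := div_pos (by linarith) hQ
    have h3 : 0 < 1 / Q ^ 2 := by positivity
    rw [hrdef]; linarith
  set φ : ℝ → ℝ := fun s =>
    (1 / (2 * β)) * ((-1 / Q) * s + ((A + c) / Q + 1 / Q ^ 2) + r / (1 + s * Q)) with hφdef
  set ψ : ℝ → ℝ := fun s => (1 / (2 * β)) * ((-1 / Q) - r * Q / (1 + s * Q) ^ 2) with hψdef
  have heq : ∀ s : ℝ, 1 + s * Q ≠ 0 → g s = φ s := by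
    intro s hs
    simp only [hgdef, hφdef, hrdef]
    field_simp
    ring
  have hopen : IsOpen {s : ℝ | 0 < 1 + s * Q} :=
    isOpen_lt continuous_const (continuous_const.add (continuous_id.mul continuous_const))
  have hu : ∀ s : ℝ, HasDerivAt (fun t : ℝ => 1 + t * Q) Q s := by
    intro s
    simpa using ((hasDerivAt_id s).mul_const Q).const_add 1
  have hφ' : ∀ s : ℝ, 0 < 1 + s * Q → HasDerivAt φ (ψ s) s := by
    intro s hs
    have h2 : HasDerivAt (fun t : ℝ => r / (1 + t * Q)) (-(r * Q) / (1 + s * Q) ^ 2) s := by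
      have := ((hu s).inv hs.ne').const_mul r
      refine this.congr_deriv ?_
      field_simp
    have hlin : HasDerivAt (fun t : ℝ => (-1 / Q) * t + ((A + c) / Q + 1 / Q ^ 2))
        (-1 / Q) s := by
      have h := ((hasDerivAt_id s).const_mul (-1 / Q)).add_const ((A + c) / Q + 1 / Q ^ 2)
      simp only [mul_one] at h
      exact h
    have := (hlin.add h2).const_mul (1 / (2 * β))
    refine this.congr_deriv ?_
    simp only [hψdef]
    field_simp
    ring
  have hψ' : ∀ p : ℝ, 0 < 1 + p * Q →
      HasDerivAt ψ ((1 / (2 * β)) * (2 * r * Q ^ 2 / (1 + p * Q) ^ 3)) p := by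
    intro p hp
    have hpow : HasDerivAt (fun t : ℝ => (1 + t * Q) ^ 2) (2 * (1 + p * Q) * Q) p := by
      have := (hu p).pow 2
      refine this.congr_deriv ?_
      ring
    have hinv : HasDerivAt (fun t : ℝ => ((1 + t * Q) ^ 2)⁻¹)
        (-(2 * (1 + p * Q) * Q) / ((1 + p * Q) ^ 2) ^ 2) p := hpow.inv (by positivity)
    have h2 : HasDerivAt (fun t : ℝ => (-1 / Q) - r * Q / (1 + t * Q) ^ 2)
        (-(r * Q * (-(2 * (1 + p * Q) * Q) / ((1 + p * Q) ^ 2) ^ 2))) p := by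
      have := (hinv.const_mul (r * Q)).const_sub (-1 / Q)
      simpa [div_eq_mul_inv] using this
    have := h2.const_mul (1 / (2 * β))
    refine this.congr_deriv ?_
    have : (1 + p * Q) ≠ 0 := hp.ne'
    field_simp
  -- deriv g = ψ on the open set
  have hderiv_g : ∀ s : ℝ, 0 < 1 + s * Q → deriv g s = ψ s := by
    intro s hs
    have hev : g =ᶠ[nhds s] φ :=
      Filter.eventually_of_mem (hopen.mem_nhds hs) (fun t ht => heq t (ne_of_gt ht))
    rw [hev.deriv_eq, (hφ' s hs).deriv]
  have key : ∀ p : ℝ, 0 < 1 + p * Q → deriv (deriv g) p < 0 := by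
    intro p hp
    have hev : deriv g =ᶠ[nhds p] ψ :=
      Filter.eventually_of_mem (hopen.mem_nhds hp) (fun t ht => hderiv_g t ht)
    rw [hev.deriv_eq, (hψ' p hp).deriv]
    have h1 : 0 < (1 + p * Q) ^ 3 := by positivity
    have h2 : 2 * r * Q ^ 2 / (1 + p * Q) ^ 3 < 0 := by
      apply div_neg_of_neg_of_pos _ h1
      exact mul_neg_of_neg_of_pos (by linarith) (by positivity)
    have h3 : 0 < 1 / (2 * β) := by positivity
    nlinarith
  constructor
  · intro p hp
    exact key p (by positivity)
  · apply strictConcaveOn_of_deriv2_neg (convex_Ioi 0)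
    · apply ContinuousOn.mul continuousOn_const
      apply ContinuousOn.div (by fun_prop) (by fun_prop)
      intro x hx
      have : (0:ℝ) < x := hx
      positivity
    · intro x hx
      rw [interior_Ioi] at hx
      have : (0:ℝ) < x := hx
      have h := key x (by positivity)
      simpa [Function.iterate_succ, Function.comp] using h
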